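/- arXiv:1312.1171 — 8 statements merged into one kernel-verified Lean document; each statement's English description precedes it below -/
import Mathlib

section
/- Let $(a_\ell)_{\ell \in \mathbb{N}_0}$ be a sequence of positive reals and let $s > 0$. If there exist $C > 0$ and $0 < \rho < 1$ with $a_{\ell+k}^2 \le C \rho^k a_\ell^2$ for all $k, \ell \in \mathbb{N}_0$, then $\sum_{k=0}^{\ell-1} a_k^{-1/s} \le C^{1/(2s)}(1 - \rho^{1/(2s)})^{-1} a_\ell^{-1/s}$ for all $\ell \in \mathbb{N}$. -/
open Finset

/-- Lemma 4.7 (iii) ⟹ (ii): R-linear convergence implies inverse summability. -/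
theorem Rlinear_implies_inverse_summability
    (a : ℕ → ℝ) (ha : ∀ ℓ, 0 < a ℓ) (s : ℝ) (hs : 0 < s)
    (C : ℝ) (hC : 0 < C) (ρ : ℝ) (hρ0 : 0 < ρ) (hρ1 : ρ < 1)
    (hlin : ∀ k ℓ : ℕ, (a (ℓ + k)) ^ 2 ≤ C * ρ ^ k * (a ℓ) ^ 2) :
    ∀ ℓ : ℕ, 1 ≤ ℓ →
      ∑ k ∈ Finset.range ℓ, (a k) ^ (-(1 / s)) ≤
        C ^ (1 / (2 * s)) * (1 - ρ ^ (1 / (2 * s)))⁻¹ * (a ℓ) ^ (-(1 / s)) := by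
  intro ℓ hℓ
  set t : ℝ := 1 / (2 * s) with ht
  have hts : 0 < t := by positivity
  set q : ℝ := ρ ^ t with hq
  have hq0 : 0 < q := Real.rpow_pos_of_pos hρ0 t
  have hq1 : q < 1 := Real.rpow_lt_one hρ0.le hρ1 hts
  have hsq : ∀ x : ℝ, 0 < x → (x ^ 2) ^ t = x ^ (1 / s) := by
    intro x hx
    rw [← Real.rpow_natCast x 2, ← Real.rpow_mul hx.le]
    norm_num
    congr 1
    rw [ht]
    field_simp
  have key : ∀ k, k < ℓ →
      a k ^ (-(1 / s)) ≤ C ^ t * q ^ (ℓ - k) * a ℓ ^ (-(1 / s)) := by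
    intro k hk
    have h := hlin (ℓ - k) k
    rw [Nat.add_sub_cancel' hk.le] at h
    have h2 : (a ℓ ^ 2) ^ t ≤ (C * ρ ^ (ℓ - k) * a k ^ 2) ^ t :=
      Real.rpow_le_rpow (by positivity) h hts.le
    have hCρ : (C * ρ ^ (ℓ - k) * a k ^ 2) ^ t
        = C ^ t * q ^ (ℓ - k) * (a k ^ 2) ^ t := by
      rw [Real.mul_rpow (by positivity) (by positivity),
        Real.mul_rpow hC.le (by positivity)]
      rw [← Real.rpow_natCast ρ (ℓ - k), ← Real.rpow_mul hρ0.le,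
        mul_comm ((ℓ - k : ℕ) : ℝ) t, Real.rpow_mul hρ0.le, Real.rpow_natCast]
    rw [hCρ, hsq _ (ha ℓ), hsq _ (ha k)] at h2
    have hx : (0:ℝ) < a k ^ (1 / s) := Real.rpow_pos_of_pos (ha k) _
    have hy : (0:ℝ) < a ℓ ^ (1 / s) := Real.rpow_pos_of_pos (ha ℓ) _
    rw [Real.rpow_neg (ha k).le, Real.rpow_neg (ha ℓ).le,
      ← div_eq_mul_inv, inv_eq_one_div, div_le_div_iff₀ hx hy, one_mul]
    calc a ℓ ^ (1 / s) ≤ C ^ t * q ^ (ℓ - k) * a k ^ (1 / s) := h2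
      _ = C ^ t * q ^ (ℓ - k) * a k ^ (1 / s) := rfl
  have hsum : ∑ k ∈ Finset.range ℓ, q ^ (ℓ - k) ≤ (1 - q)⁻¹ := by
    have hre : ∑ k ∈ Finset.range ℓ, q ^ (ℓ - k)
        = ∑ k ∈ Finset.range ℓ, q ^ (k + 1) := by
      rw [← Finset.sum_range_reflect (fun k => q ^ (k + 1)) ℓ]
      apply Finset.sum_congr rfl
      intro j hj
      rw [Finset.mem_range] at hj
      congr 1
      omega
    rw [hre]
    calc ∑ k ∈ Finset.range ℓ, q ^ (k + 1)
        ≤ ∑ k ∈ Finset.range ℓ, q ^ k := by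
          apply Finset.sum_le_sum
          intro k _
          exact pow_le_pow_of_le_one hq0.le hq1.le (Nat.le_succ k)
      _ ≤ ∑' k : ℕ, q ^ k :=
          Summable.sum_le_tsum _ (fun i _ => by positivity)
            (summable_geometric_of_lt_one hq0.le hq1)
      _ = (1 - q)⁻¹ := tsum_geometric_of_lt_one hq0.le hq1
  calc ∑ k ∈ Finset.range ℓ, a k ^ (-(1 / s))
      ≤ ∑ k ∈ Finset.range ℓ, C ^ t * q ^ (ℓ - k) * a ℓ ^ (-(1 / s)) :=
        Finset.sum_le_sum fun k hk => key k (Finset.mem_range.mp hk)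
    _ = C ^ t * (∑ k ∈ Finset.range ℓ, q ^ (ℓ - k)) * a ℓ ^ (-(1 / s)) := by
        rw [Finset.mul_sum, Finset.sum_mul]
    _ ≤ C ^ t * (1 - q)⁻¹ * a ℓ ^ (-(1 / s)) := by
        have hpos : (0:ℝ) < a ℓ ^ (-(1 / s)) := Real.rpow_pos_of_pos (ha ℓ) _
        gcongr
end

section
/- Let $(a_\ell)_{\ell \in \mathbb{N}_0}$ be a sequence of positive reals and $s > 0$. If there exists $C > 0$ with $\sum_{k=0}^{\ell-1} a_k^{-1/s} \le C a_\ell^{-1/s}$ for all $\ell \in \mathbb{N}$, then for all $k, \ell \in \mathbb{N}_0$ it holds $a_{\ell+k}^2 \le (1+C)^{2s}(1+C^{-1})^{-2sk} a_\ell^2$; in particular the sequence converges R-linearly. -/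
open Finset

/-- Lemma 4.7 (ii) ⟹ (iii): inverse summability implies R-linear convergence with
`ρ = (1 + C⁻¹)⁻²ˢ` and `C' = (1 + C)²ˢ`. -/
theorem inverse_summability_implies_Rlinear
    (a : ℕ → ℝ) (ha : ∀ ℓ, 0 < a ℓ) (s : ℝ) (hs : 0 < s)
    (C : ℝ) (hC : 0 < C)
    (hinv : ∀ ℓ : ℕ, 1 ≤ ℓ →
      ∑ k ∈ Finset.range ℓ, (a k) ^ (-(1 / s)) ≤ C * (a ℓ) ^ (-(1 / s))) :
    ∀ k ℓ : ℕ, (a (ℓ + k)) ^ 2 ≤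
      (1 + C) ^ (2 * s) * ((1 + C⁻¹) ^ (-(2 * s))) ^ (k : ℕ) * (a ℓ) ^ 2 := by
  set b : ℕ → ℝ := fun m => a m ^ (-(1 / s)) with hbdef
  have hb : ∀ m, 0 < b m := fun m => Real.rpow_pos_of_pos (ha m) _
  have h1C : (0:ℝ) < 1 + C⁻¹ := by positivity
  have hstep : ∀ m : ℕ, 1 ≤ m →
      (1 + C⁻¹) * ∑ i ∈ range m, b i ≤ ∑ i ∈ range (m+1), b i := by
    intro m hm
    rw [Finset.sum_range_succ]
    have h : C⁻¹ * ∑ i ∈ range m, b i ≤ b m := by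
      rw [inv_mul_le_iff₀ hC]
      exact hinv m hm
    linarith
  have hS : ∀ ℓ j : ℕ, (1 + C⁻¹) ^ j * b ℓ ≤ ∑ i ∈ range (ℓ + j + 1), b i := by
    intro ℓ j
    induction j with
    | zero =>
      simpa using Finset.single_le_sum (f := b) (fun i _ => (hb i).le)
        (Finset.mem_range.mpr (Nat.lt_succ_self ℓ))
    | succ j ih =>
      have h1 : (1 + C⁻¹) * ((1 + C⁻¹) ^ j * b ℓ) ≤
          (1 + C⁻¹) * ∑ i ∈ range (ℓ + j + 1), b i :=
        mul_le_mul_of_nonneg_left ih h1C.le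
      have h2 := hstep (ℓ + j + 1) (Nat.le_add_left 1 _)
      calc (1 + C⁻¹) ^ (j+1) * b ℓ = (1 + C⁻¹) * ((1 + C⁻¹) ^ j * b ℓ) := by ring
        _ ≤ ∑ i ∈ range (ℓ + (j+1) + 1), b i := h1.trans h2
  have hbk : ∀ ℓ j : ℕ, C⁻¹ * ((1 + C⁻¹) ^ j * b ℓ) ≤ b (ℓ + j + 1) := by
    intro ℓ j
    have h := hinv (ℓ + j + 1) (Nat.le_add_left 1 _)
    have h2 : ∑ i ∈ range (ℓ + j + 1), b i ≤ C * b (ℓ + j + 1) := h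
    have h3 := mul_le_mul_of_nonneg_left ((hS ℓ j).trans h2)
      (by positivity : (0:ℝ) ≤ C⁻¹)
    have h4 : C⁻¹ * (C * b (ℓ + j + 1)) = b (ℓ + j + 1) := by
      rw [← mul_assoc, inv_mul_cancel₀ hC.ne', one_mul]
    rw [← mul_assoc]
    linarith
  have ham : ∀ m, a m ^ 2 = b m ^ (-(2*s)) := by
    intro m
    rw [hbdef]
    rw [← Real.rpow_mul (ha m).le]
    have hexp : (-(1/s)) * (-(2*s)) = 2 := by field_simp
    rw [hexp, Real.rpow_two]
  intro k ℓ
  match k with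
  | 0 =>
    have h1 : (1:ℝ) ≤ (1 + C) ^ (2 * s) :=
      Real.one_le_rpow (by linarith) (by positivity)
    have h2 : (0:ℝ) ≤ a ℓ ^ 2 := sq_nonneg _
    simp only [Nat.add_zero, pow_zero, mul_one]
    nlinarith
  | j + 1 =>
    have hpos : 0 < C⁻¹ * ((1 + C⁻¹) ^ j * b ℓ) :=
      mul_pos (by positivity) (mul_pos (by positivity) (hb ℓ))
    have hle : (b (ℓ + j + 1)) ^ (-(2*s)) ≤ (C⁻¹ * ((1 + C⁻¹) ^ j * b ℓ)) ^ (-(2*s)) :=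
      Real.rpow_le_rpow_of_nonpos hpos (hbk ℓ j) (by linarith)
    have hcoef : (C⁻¹ * ((1 + C⁻¹) ^ j * b ℓ)) ^ (-(2*s)) =
        (1 + C) ^ (2 * s) * ((1 + C⁻¹) ^ (-(2 * s))) ^ (j+1 : ℕ) * b ℓ ^ (-(2*s)) := by
      have h1 : (1 : ℝ) + C = C * (1 + C⁻¹) := by
        rw [mul_add, mul_one, mul_inv_cancel₀ hC.ne']; ring
      rw [Real.mul_rpow (by positivity) (mul_pos (pow_pos h1C j) (hb ℓ)).le,
          Real.mul_rpow (pow_nonneg h1C.le j) (hb ℓ).le,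
          Real.inv_rpow hC.le, ← Real.rpow_neg hC.le, neg_neg,
          ← Real.rpow_natCast ((1 + C⁻¹)) j, ← Real.rpow_mul h1C.le,
          h1, Real.mul_rpow hC.le h1C.le,
          ← Real.rpow_natCast ((1 + C⁻¹) ^ (-(2 * s))) (j+1), ← Real.rpow_mul h1C.le]
      rw [show ((j:ℝ)) * -(2*s) = 2*s + -(2*s)*((j+1:ℕ):ℝ) by push_cast; ring,
        Real.rpow_add h1C]
      ring
    calc a (ℓ + (j+1)) ^ 2 = (b (ℓ + j + 1)) ^ (-(2*s)) := by
          rw [← ham, Nat.add_assoc]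
      _ ≤ (1 + C) ^ (2 * s) * ((1 + C⁻¹) ^ (-(2 * s))) ^ (j+1 : ℕ) * b ℓ ^ (-(2*s)) := by
          rw [← hcoef]; exact hle
      _ = (1 + C) ^ (2 * s) * ((1 + C⁻¹) ^ (-(2 * s))) ^ ((j+1 : ℕ) : ℕ) * (a ℓ) ^ 2 := by
          rw [ham]
end

section
/- Let $(a_\ell)$, $(b_\ell)$ be sequences of nonnegative reals satisfying the estimator reduction $a_{\ell+1}^2 \le q a_\ell^2 + C_1 b_\ell^2$ with $0 < q < 1$, $C_1 > 0$, reliability $e_\ell \le C_2 a_\ell$ for a nonnegative sequence $(e_\ell)$, and the general quasi-orthogonality: there exist $0 \le \varepsilon < (1-q)/(C_2^2 C_1)$ and $C_3 > 0$ with $\sum_{k=\ell}^{N}(b_k^2 - \varepsilon e_k^2) \le C_3 a_\ell^2$ for all $N \ge \ell \ge 0$. Then there exists $C_4 > 0$ such that $\sum_{k=\ell+1}^{\infty} a_k^2 \le C_4 a_\ell^2$ for all $\ell$; in particular $(a_\ell)$ converges R-linearly to zero. -/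
open Finset

/-- Proposition 4.8 (abstract version): estimator reduction, reliability and general
quasi-orthogonality imply uniform summability (hence R-linear convergence) of the
estimator sequence. -/
theorem quasi_orthogonality_implies_tail_summability
    (a b e : ℕ → ℝ) (ha : ∀ ℓ, 0 ≤ a ℓ) (hb : ∀ ℓ, 0 ≤ b ℓ) (he : ∀ ℓ, 0 ≤ e ℓ)
    (q C₁ C₂ : ℝ) (hq0 : 0 < q) (hq1 : q < 1) (hC₁ : 0 < C₁) (hC₂ : 0 < C₂)
    (hred : ∀ ℓ, (a (ℓ + 1)) ^ 2 ≤ q * (a ℓ) ^ 2 + C₁ * (b ℓ) ^ 2)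
    (hrel : ∀ ℓ, e ℓ ≤ C₂ * a ℓ)
    (hqo : ∃ ε C₃ : ℝ, 0 ≤ ε ∧ ε < (1 - q) / (C₂ ^ 2 * C₁) ∧ 0 < C₃ ∧
      ∀ ℓ N : ℕ, ℓ ≤ N →
        ∑ k ∈ Finset.Icc ℓ N, ((b k) ^ 2 - ε * (e k) ^ 2) ≤ C₃ * (a ℓ) ^ 2) :
    ∃ C₄ > 0, ∀ ℓ : ℕ, Summable (fun k : ℕ => (a (ℓ + 1 + k)) ^ 2) ∧
      (∑' k : ℕ, (a (ℓ + 1 + k)) ^ 2) ≤ C₄ * (a ℓ) ^ 2 := by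
  obtain ⟨ε, C₃, hε0, hεlt, hC₃, hqo⟩ := hqo
  set μ : ℝ := q + C₁ * ε * C₂ ^ 2 with hμdef
  have hμ0 : 0 ≤ μ := by positivity
  have hμ1 : μ < 1 := by
    have hpos : 0 < C₂ ^ 2 * C₁ := by positivity
    have := (lt_div_iff₀ hpos).mp hεlt
    nlinarith
  set K : ℝ := (1 + C₁ * C₃) / (1 - μ) with hKdef
  have h1μ : 0 < 1 - μ := by linarith
  have hK1 : 1 ≤ K := by
    rw [le_div_iff₀ h1μ]
    nlinarith
  have hK0 : 0 < K := lt_of_lt_of_le one_pos hK1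
  -- key uniform bound on partial sums
  have key : ∀ ℓ N : ℕ, ℓ ≤ N → ∑ k ∈ Finset.Icc ℓ N, (a k) ^ 2 ≤ K * (a ℓ) ^ 2 := by
    intro ℓ N hℓN
    rcases eq_or_lt_of_le hℓN with rfl | hlt
    · simp only [Finset.Icc_self, Finset.sum_singleton]
      nlinarith [sq_nonneg (a ℓ)]
    · obtain ⟨M, rfl⟩ : ∃ M, N = M + 1 := ⟨N - 1, by omega⟩
      have hℓM : ℓ ≤ M := by omega
      set T : ℝ := ∑ k ∈ Finset.Icc ℓ M, (a k) ^ 2 with hT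
      set T' : ℝ := ∑ k ∈ Finset.Icc ℓ (M + 1), (a k) ^ 2 with hT'
      -- sum the estimator reduction
      have hsum : ∑ k ∈ Finset.Icc ℓ M, (a (k + 1)) ^ 2 ≤
          q * T + C₁ * ∑ k ∈ Finset.Icc ℓ M, (b k) ^ 2 := by
        calc ∑ k ∈ Finset.Icc ℓ M, (a (k + 1)) ^ 2
            ≤ ∑ k ∈ Finset.Icc ℓ M, (q * (a k) ^ 2 + C₁ * (b k) ^ 2) :=
              Finset.sum_le_sum fun k _ => hred k
          _ = q * T + C₁ * ∑ k ∈ Finset.Icc ℓ M, (b k) ^ 2 := by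
              rw [Finset.sum_add_distrib, ← Finset.mul_sum, ← Finset.mul_sum]
      -- bound the b-sum via quasi-orthogonality and reliability
      have hbsum : ∑ k ∈ Finset.Icc ℓ M, (b k) ^ 2 ≤ C₃ * (a ℓ) ^ 2 + ε * (C₂ ^ 2 * T) := by
        have h1 : ∑ k ∈ Finset.Icc ℓ M, ((b k) ^ 2 - ε * (e k) ^ 2) ≤ C₃ * (a ℓ) ^ 2 :=
          hqo ℓ M hℓM
        have h2 : ∑ k ∈ Finset.Icc ℓ M, (e k) ^ 2 ≤ C₂ ^ 2 * T := by
          rw [hT, Finset.mul_sum]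
          refine Finset.sum_le_sum fun k _ => ?_
          have := hrel k
          nlinarith [he k, ha k, hC₂.le]
        have h3 : ∑ k ∈ Finset.Icc ℓ M, (b k) ^ 2 =
            (∑ k ∈ Finset.Icc ℓ M, ((b k) ^ 2 - ε * (e k) ^ 2)) +
              ε * ∑ k ∈ Finset.Icc ℓ M, (e k) ^ 2 := by
          rw [Finset.mul_sum, ← Finset.sum_add_distrib]
          congr 1; ext k; ring
        rw [h3]
        have := mul_le_mul_of_nonneg_left h2 hε0
        linarith
      -- shift the summation index
      have hshift : ∑ k ∈ Finset.Icc ℓ M, (a (k + 1)) ^ 2 =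
          ∑ k ∈ Finset.Icc (ℓ + 1) (M + 1), (a k) ^ 2 := by
        rw [← Finset.Ico_add_one_right_eq_Icc, ← Finset.Ico_add_one_right_eq_Icc,
          Finset.sum_Ico_eq_sum_range, Finset.sum_Ico_eq_sum_range]
        simp only [Nat.add_sub_add_right]
        refine Finset.sum_congr rfl fun k _ => ?_
        have hk : ℓ + k + 1 = ℓ + 1 + k := by omega
        rw [hk]
      -- split off the first term of T'
      have hsplit : T' = (a ℓ) ^ 2 + ∑ k ∈ Finset.Icc (ℓ + 1) (M + 1), (a k) ^ 2 := by
        rw [hT', ← Finset.insert_Icc_add_one_left_eq_Icc hℓN,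
          Finset.sum_insert (by simp [Finset.mem_Icc])]
      have hTT' : T ≤ T' := by
        apply Finset.sum_le_sum_of_subset_of_nonneg
        · exact Finset.Icc_subset_Icc_right (by omega)
        · intro k _ _; positivity
      have hup : T' ≤ (a ℓ) ^ 2 + (q * T + C₁ * (C₃ * (a ℓ) ^ 2 + ε * (C₂ ^ 2 * T))) := by
        rw [hsplit, ← hshift]
        have := mul_le_mul_of_nonneg_left hbsum hC₁.le
        linarith
      have h2 : (q + C₁ * ε * C₂ ^ 2) * T ≤ (q + C₁ * ε * C₂ ^ 2) * T' :=
        mul_le_mul_of_nonneg_left hTT' (by positivity)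
      have hmain : T' ≤ μ * T' + (1 + C₁ * C₃) * (a ℓ) ^ 2 := by
        rw [hμdef]; nlinarith [hup, h2]
      rw [hKdef, div_mul_eq_mul_div, le_div_iff₀ h1μ]
      nlinarith [hmain]
  refine ⟨K, hK0, fun ℓ => ?_⟩
  have hpart : ∀ n : ℕ, ∑ k ∈ Finset.range n, (a (ℓ + 1 + k)) ^ 2 ≤ K * (a ℓ) ^ 2 := by
    intro n
    have heq : ∑ k ∈ Finset.range n, (a (ℓ + 1 + k)) ^ 2 =
        ∑ k ∈ Finset.Ico (ℓ + 1) (ℓ + 1 + n), (a k) ^ 2 := by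
      rw [Finset.sum_Ico_eq_sum_range]
      simp only [Nat.add_sub_cancel_left]
    rw [heq]
    calc ∑ k ∈ Finset.Ico (ℓ + 1) (ℓ + 1 + n), (a k) ^ 2
        ≤ ∑ k ∈ Finset.Icc ℓ (ℓ + n), (a k) ^ 2 := by
          apply Finset.sum_le_sum_of_subset_of_nonneg
          · intro k hk
            simp only [Finset.mem_Ico] at hk
            simp only [Finset.mem_Icc]
            omega
          · intro k _ _; positivity
      _ ≤ K * (a ℓ) ^ 2 := key ℓ (ℓ + n) (by omega)
  have hsummable : Summable (fun k : ℕ => (a (ℓ + 1 + k)) ^ 2) :=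
    summable_of_sum_range_le (fun k => by positivity) hpart
  exact ⟨hsummable, Summable.tsum_le_of_sum_range_le hsummable hpart⟩
end

section
/- Let $(a_\ell)$, $(b_\ell)$, $(e_\ell)$ be sequences of nonnegative reals. Suppose reliability $e_\ell \le C_{rel} a_\ell$, the quasi-triangle inequality $C_\Delta^{-1} b_\ell \le e_{\ell+1} + e_\ell$ (for constants $C_{rel}, C_\Delta > 0$), and uniform summability $\sum_{k=\ell+1}^{\infty} a_k^2 \le C a_\ell^2$ for all $\ell$. Then there exists $C' > 0$ with $\sum_{k=\ell}^{N} b_k^2 \le C' a_\ell^2$ for all $N \ge \ell \ge 0$, i.e., the general quasi-orthogonality holds with $\varepsilon = 0$. -/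
open Finset

/-- Proposition 4.10 (abstract version): reliability, a quasi-triangle bound and uniform
summability of the estimator imply the general quasi-orthogonality with `ε = 0`. -/
theorem tail_summability_implies_quasi_orthogonality
    (a b e : ℕ → ℝ) (ha : ∀ ℓ, 0 ≤ a ℓ) (hb : ∀ ℓ, 0 ≤ b ℓ) (he : ∀ ℓ, 0 ≤ e ℓ)
    (Crel CΔ C : ℝ) (hCrel : 0 < Crel) (hCΔ : 0 < CΔ) (hC : 0 < C)
    (hrel : ∀ ℓ, e ℓ ≤ Crel * a ℓ)
    (htri : ∀ ℓ, CΔ⁻¹ * b ℓ ≤ e (ℓ + 1) + e ℓ)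
    (hsum : ∀ ℓ, Summable (fun k : ℕ => (a (ℓ + 1 + k)) ^ 2))
    (hbound : ∀ ℓ, (∑' k : ℕ, (a (ℓ + 1 + k)) ^ 2) ≤ C * (a ℓ) ^ 2) :
    ∃ C' > 0, ∀ ℓ N : ℕ, ℓ ≤ N →
      ∑ k ∈ Finset.Icc ℓ N, (b k) ^ 2 ≤ C' * (a ℓ) ^ 2 := by
  -- pointwise bound on b
  have hbpt : ∀ k, (b k) ^ 2 ≤ 2 * (CΔ * Crel) ^ 2 * ((a (k+1))^2 + (a k)^2) := by
    intro k
    have h1 : b k ≤ CΔ * Crel * (a (k+1) + a k) := by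
      have h2 := htri k
      have h3 : e (k+1) + e k ≤ Crel * (a (k+1) + a k) := by
        have := hrel (k+1); have := hrel k; nlinarith
      have h4 : CΔ⁻¹ * b k ≤ Crel * (a (k+1) + a k) := le_trans h2 h3
      have h5 := mul_le_mul_of_nonneg_left h4 hCΔ.le
      rwa [← mul_assoc, mul_inv_cancel₀ hCΔ.ne', one_mul, ← mul_assoc] at h5
    nlinarith [hb k, ha k, ha (k+1), sq_nonneg (a (k+1) - a k),
      mul_pos hCΔ hCrel, sq_nonneg (CΔ * Crel * (a (k+1) + a k))]
  -- tail sum bound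
  have htail : ∀ ℓ m : ℕ, ∑ k ∈ Finset.Icc (ℓ+1) m, (a k)^2 ≤ C * (a ℓ)^2 := by
    intro ℓ m
    rw [← Finset.Ico_add_one_right_eq_Icc, Finset.sum_Ico_eq_sum_range]
    exact le_trans (Summable.sum_le_tsum _ (fun i _ => sq_nonneg _) (hsum ℓ)) (hbound ℓ)
  -- full sum bound for a
  have hAsum : ∀ ℓ m : ℕ, ℓ ≤ m → ∑ k ∈ Finset.Icc ℓ m, (a k)^2 ≤ (1+C) * (a ℓ)^2 := by
    intro ℓ m hlm
    rw [Finset.Icc_eq_cons_Ioc hlm, Finset.sum_cons, ← Finset.Icc_add_one_left_eq_Ioc]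
    have := htail ℓ m
    nlinarith [htail ℓ m]
  refine ⟨4 * (CΔ * Crel) ^ 2 * (1 + C), by positivity, fun ℓ N hlN => ?_⟩
  have hshift : ∑ k ∈ Finset.Icc ℓ N, (a (k+1))^2 ≤ (1+C) * (a ℓ)^2 := by
    have : ∑ k ∈ Finset.Icc ℓ N, (a (k+1))^2 = ∑ k ∈ Finset.Icc (ℓ+1) (N+1), (a k)^2 := by
      rw [← Finset.Ico_add_one_right_eq_Icc, ← Finset.Ico_add_one_right_eq_Icc, Finset.sum_Ico_eq_sum_range, Finset.sum_Ico_eq_sum_range]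
      apply Finset.sum_congr (by congr 1; omega) (fun i _ => by ring_nf)
    rw [this]
    calc ∑ k ∈ Finset.Icc (ℓ+1) (N+1), (a k)^2 ≤ C * (a ℓ)^2 := htail ℓ (N+1)
      _ ≤ (1+C) * (a ℓ)^2 := by nlinarith [sq_nonneg (a ℓ)]
  calc ∑ k ∈ Finset.Icc ℓ N, (b k) ^ 2
      ≤ ∑ k ∈ Finset.Icc ℓ N, 2 * (CΔ * Crel) ^ 2 * ((a (k+1))^2 + (a k)^2) :=
        Finset.sum_le_sum (fun k _ => hbpt k)
    _ = 2 * (CΔ * Crel) ^ 2 *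
        ((∑ k ∈ Finset.Icc ℓ N, (a (k+1))^2) + ∑ k ∈ Finset.Icc ℓ N, (a k)^2) := by
        rw [← Finset.mul_sum, Finset.sum_add_distrib]
    _ ≤ 2 * (CΔ * Crel) ^ 2 * ((1+C) * (a ℓ)^2 + (1+C) * (a ℓ)^2) := by
        have := hAsum ℓ N hlN
        have hpos : (0:ℝ) ≤ 2 * (CΔ * Crel) ^ 2 := by positivity
        nlinarith
    _ = 4 * (CΔ * Crel) ^ 2 * (1 + C) * (a ℓ)^2 := by ring
end

section
/- Let $\eta_T \ge 0$ for $T$ in a finite index set $\mathcal{T}$, partitioned into refined elements $\mathcal{R} \subseteq \mathcal{T}$ and unrefined $\mathcal{T} \setminus \mathcal{R}$, and let $\hat\eta_T \ge 0$ for $T$ in $\hat{\mathcal{T}}$ with $\mathcal{T} \cap \hat{\mathcal{T}} = \mathcal{T} \setminus \mathcal{R}$. Let $\eta^2 = \sum_{T \in \mathcal{T}} \eta_T^2$, $\hat\eta^2 = \sum_{T \in \hat{\mathcal{T}}} \hat\eta_T^2$, $d \ge 0$. Assume: (reduction) $\sum_{T \in \hat{\mathcal{T}} \setminus \mathcal{T}}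 \hat\eta_T^2 \le q \sum_{T \in \mathcal{R}} \eta_T^2 + C_{red} d^2$ with $0 < q < 1$, (stability) $\big(\sum_{T \in \mathcal{T} \cap \hat{\mathcal{T}}} \hat\eta_T^2\big)^{1/2} \le \big(\sum_{T \in \mathcal{T} \cap \hat{\mathcal{T}}} \eta_T^2\big)^{1/2} + C_{stab} d$, and (Dörfler marking) $\theta \eta^2 \le \sum_{T \in \mathcal{R}} \eta_T^2$ with $0 < \theta \le 1$. Then for every $\delta > 0$: $\hat\eta^2 \le (1+\delta)(1 - (1-q)\theta) \eta^2 + (C_{red} + (1 + \delta^{-1}) C_{stab}^2) d^2$. -/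
open Finset

/-- Lemma 4.5 (estimator reduction): stability on non-refined elements, reduction on
refined elements and Dörfler marking imply the estimator reduction estimate. -/
theorem estimator_reduction
    {α : Type*} [DecidableEq α]
    (T That R : Finset α) (hR : R ⊆ T) (hcap : T ∩ That = T \ R)
    (ηT ηhatT : α → ℝ) (hη : ∀ x, 0 ≤ ηT x) (hηhat : ∀ x, 0 ≤ ηhatT x)
    (d q Cred Cstab θ : ℝ) (hd : 0 ≤ d) (hq0 : 0 < q) (hq1 : q < 1)
    (hCred : 0 < Cred) (hCstab : 0 < Cstab) (hθ0 : 0 < θ) (hθ1 : θ ≤ 1)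
    (hreduction : ∑ x ∈ That \ T, (ηhatT x) ^ 2 ≤
      q * ∑ x ∈ R, (ηT x) ^ 2 + Cred * d ^ 2)
    (hstability : Real.sqrt (∑ x ∈ T ∩ That, (ηhatT x) ^ 2) ≤
      Real.sqrt (∑ x ∈ T ∩ That, (ηT x) ^ 2) + Cstab * d)
    (hdoerfler : θ * ∑ x ∈ T, (ηT x) ^ 2 ≤ ∑ x ∈ R, (ηT x) ^ 2) :
    ∀ δ : ℝ, 0 < δ →
      ∑ x ∈ That, (ηhatT x) ^ 2 ≤
        (1 + δ) * (1 - (1 - q) * θ) * ∑ x ∈ T, (ηT x) ^ 2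
          + (Cred + (1 + δ⁻¹) * Cstab ^ 2) * d ^ 2 := by

  intro δ hδ
  set A := ∑ x ∈ T, (ηT x) ^ 2 with hA
  set B := ∑ x ∈ R, (ηT x) ^ 2 with hB
  set S := ∑ x ∈ T ∩ That, (ηT x) ^ 2 with hS
  set Sh := ∑ x ∈ T ∩ That, (ηhatT x) ^ 2 with hSh
  have hSnn : 0 ≤ S := Finset.sum_nonneg fun x _ => sq_nonneg _
  have hShnn : 0 ≤ Sh := Finset.sum_nonneg fun x _ => sq_nonneg _
  -- split the sum over That
  have hsplit : ∑ x ∈ That, (ηhatT x) ^ 2 = (∑ x ∈ That \ T, (ηhatT x) ^ 2) + Sh := by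
    rw [hSh, inter_comm]
    have h1 : That ∩ T ⊆ That := inter_subset_left
    have := Finset.sum_sdiff (f := fun x => (ηhatT x) ^ 2) h1
    rw [Finset.sdiff_inter_self_left] at this
    linarith [this]
  -- S = A - B
  have hSAB : S = A - B := by
    have := Finset.sum_sdiff (f := fun x => (ηT x) ^ 2) hR
    rw [hS, hcap]
    linarith [this]
  -- Young's inequality step
  have hsq : Sh ≤ (Real.sqrt S + Cstab * d) ^ 2 := by
    have h0 : 0 ≤ Real.sqrt S + Cstab * d := by positivity
    calc Sh = Real.sqrt Sh ^ 2 := (Real.sq_sqrt hShnn).symm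
      _ ≤ (Real.sqrt S + Cstab * d) ^ 2 := by
          apply pow_le_pow_left₀ (Real.sqrt_nonneg _) hstability
  have hSS : Real.sqrt S ^ 2 = S := Real.sq_sqrt hSnn
  have hyoung : (Real.sqrt S + Cstab * d) ^ 2 ≤ (1 + δ) * S + (1 + δ⁻¹) * (Cstab * d) ^ 2 := by
    have hSS2 : δ ^ 2 * Real.sqrt S ^ 2 = δ ^ 2 * S := by rw [hSS]
    have key2 : 2 * δ * Real.sqrt S * (Cstab * d) ≤ δ ^ 2 * S + (Cstab * d) ^ 2 := by
      nlinarith [sq_nonneg (δ * Real.sqrt S - Cstab * d), hSS2]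
    have key : 2 * Real.sqrt S * (Cstab * d) ≤ δ * S + δ⁻¹ * (Cstab * d) ^ 2 := by
      rw [← sub_nonneg]
      have h3 : δ * S + δ⁻¹ * (Cstab * d) ^ 2 - 2 * Real.sqrt S * (Cstab * d)
          = (δ ^ 2 * S + (Cstab * d) ^ 2 - 2 * δ * Real.sqrt S * (Cstab * d)) / δ := by
        field_simp
      rw [h3]
      exact div_nonneg (by linarith) hδ.le
    nlinarith [hSS]
  have hBθA : θ * A ≤ B := hdoerfler
  have h1δ : (0:ℝ) < 1 + δ := by linarith
  have hBnn : 0 ≤ B := Finset.sum_nonneg fun x _ => sq_nonneg _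
  have hfin : q * B + (1 + δ) * S ≤ (1 + δ) * (1 - (1 - q) * θ) * A := by
    rw [hSAB]
    nlinarith [mul_nonneg (mul_nonneg hδ.le hq0.le) hBnn,
      mul_nonneg (mul_nonneg h1δ.le (sub_nonneg.2 hq1.le)) (sub_nonneg.2 hBθA)]
  rw [hsplit]
  linarith [hsq, hyoung, hfin, hreduction]
end

section
/- Under the setup of the previous estimator reduction (finite index sets $\mathcal{T}, \hat{\mathcal{T}}$ with squared local contributions), assume: (stability) $\eta^2 \le \sum_{T \in \mathcal{T}\setminus\hat{\mathcal{T}}} \eta_T^2 + (1+\delta)\sum_{T \in \mathcal{T}\cap\hat{\mathcal{T}}} \hat\eta_T^2 + (1+\delta^{-1}) C_{stab}^2 d^2$ for all $\delta > 0$, (discrete reliability) $d^2 \le C_{drel}^2 \sum_{T \in \mathcal{R}} \eta_T^2$ for a set $\mathcal{R} \supseteq \mathcal{T}\setminus\hat{\mathcal{T}}$, and (contraction) $\hat\eta^2 \le \kappa_0 \eta^2$ with $0 < \kappa_0 < 1$. Then for every $\delta > 0$, $\frac{1 - (1+\delta)\kappa_0}{1 + (1+\delta^{-1}) C_{stab}^2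 C_{drel}^2}\,\eta^2 \le \sum_{T \in \mathcal{R}} \eta_T^2$. In particular, for every $0 < \theta_0 < \theta_\star := (1 + C_{stab}^2 C_{drel}^2)^{-1}$ there exists $0 < \kappa_0 < 1$ such that $\hat\eta^2 \le \kappa_0 \eta^2$ implies the Dörfler marking $\theta_0 \eta^2 \le \sum_{T \in \mathcal{R}} \eta_T^2$. -/
open Finset

/-- Proposition 4.12 (optimality of Dörfler marking): estimator contraction between a
mesh and its refinement implies the Dörfler criterion for the refined elements, for
marking parameters below the threshold `θ⋆ = (1 + Cstab² Cdrel²)⁻¹`. -/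
theorem doerfler_optimality
    {α : Type*} [DecidableEq α]
    (T That R : Finset α) (hR₁ : T \ That ⊆ R) (hR₂ : R ⊆ T)
    (ηT ηhatT : α → ℝ) (hη : ∀ x, 0 ≤ ηT x) (hηhat : ∀ x, 0 ≤ ηhatT x)
    (d Cstab Cdrel : ℝ) (hd : 0 ≤ d) (hCstab : 0 < Cstab) (hCdrel : 0 < Cdrel)
    (hstability : ∀ δ : ℝ, 0 < δ →
      ∑ x ∈ T, (ηT x) ^ 2 ≤ ∑ x ∈ T \ That, (ηT x) ^ 2
        + (1 + δ) * ∑ x ∈ T ∩ That, (ηhatT x) ^ 2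
        + (1 + δ⁻¹) * Cstab ^ 2 * d ^ 2)
    (hdrel : d ^ 2 ≤ Cdrel ^ 2 * ∑ x ∈ R, (ηT x) ^ 2) :
    (∀ κ₀ : ℝ, 0 < κ₀ → κ₀ < 1 →
      (∑ x ∈ That, (ηhatT x) ^ 2 ≤ κ₀ * ∑ x ∈ T, (ηT x) ^ 2) →
      ∀ δ : ℝ, 0 < δ →
        (1 - (1 + δ) * κ₀) / (1 + (1 + δ⁻¹) * Cstab ^ 2 * Cdrel ^ 2)
            * ∑ x ∈ T, (ηT x) ^ 2 ≤ ∑ x ∈ R, (ηT x) ^ 2) ∧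
    (∀ θ₀ : ℝ, 0 < θ₀ → θ₀ < (1 + Cstab ^ 2 * Cdrel ^ 2)⁻¹ →
      ∃ κ₀ : ℝ, 0 < κ₀ ∧ κ₀ < 1 ∧
        ((∑ x ∈ That, (ηhatT x) ^ 2 ≤ κ₀ * ∑ x ∈ T, (ηT x) ^ 2) →
          θ₀ * ∑ x ∈ T, (ηT x) ^ 2 ≤ ∑ x ∈ R, (ηT x) ^ 2)) := by
  set S := ∑ x ∈ T, (ηT x) ^ 2 with hS
  set SR := ∑ x ∈ R, (ηT x) ^ 2 with hSRdef
  have hSnn : 0 ≤ S := Finset.sum_nonneg fun x _ => sq_nonneg _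
  have hSRnn : 0 ≤ SR := Finset.sum_nonneg fun x _ => sq_nonneg _
  have key : ∀ κ₀ : ℝ, 0 < κ₀ → κ₀ < 1 →
      (∑ x ∈ That, (ηhatT x) ^ 2 ≤ κ₀ * S) → ∀ δ : ℝ, 0 < δ →
      (1 - (1 + δ) * κ₀) * S ≤ (1 + (1 + δ⁻¹) * Cstab ^ 2 * Cdrel ^ 2) * SR := by
    intro κ₀ hκ0 hκ1 hcontr δ hδ
    have hδi : 0 < δ⁻¹ := inv_pos.mpr hδ
    have h1 : ∑ x ∈ T ∩ That, (ηhatT x) ^ 2 ≤ κ₀ * S :=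
      le_trans (Finset.sum_le_sum_of_subset_of_nonneg Finset.inter_subset_right
        (fun x _ _ => sq_nonneg _)) hcontr
    have h2 : ∑ x ∈ T \ That, (ηT x) ^ 2 ≤ SR :=
      Finset.sum_le_sum_of_subset_of_nonneg hR₁ (fun x _ _ => sq_nonneg _)
    have h3 := hstability δ hδ
    have h4 : (1 + δ⁻¹) * Cstab ^ 2 * d ^ 2
        ≤ (1 + δ⁻¹) * Cstab ^ 2 * (Cdrel ^ 2 * SR) :=
      mul_le_mul_of_nonneg_left hdrel (by positivity)
    have h5 : (1 + δ) * ∑ x ∈ T ∩ That, (ηhatT x) ^ 2 ≤ (1 + δ) * (κ₀ * S) :=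
      mul_le_mul_of_nonneg_left h1 (by positivity)
    nlinarith [h3, h4, h5, h2]
  constructor
  · intro κ₀ hκ0 hκ1 hcontr δ hδ
    have hδi : 0 < δ⁻¹ := inv_pos.mpr hδ
    have hD : 0 < 1 + (1 + δ⁻¹) * Cstab ^ 2 * Cdrel ^ 2 := by positivity
    rw [div_mul_eq_mul_div, div_le_iff₀ hD]
    have := key κ₀ hκ0 hκ1 hcontr δ hδ
    nlinarith [this]
  · intro θ₀ hθ0 hθ1
    set C := Cstab ^ 2 * Cdrel ^ 2 with hCdef
    have hC : 0 < C := by positivity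
    have hθC : θ₀ * (1 + C) < 1 := by
      have h1C : 0 < 1 + C := by positivity
      calc θ₀ * (1 + C) < (1 + C)⁻¹ * (1 + C) := by
            exact mul_lt_mul_of_pos_right hθ1 h1C
        _ = 1 := inv_mul_cancel₀ (ne_of_gt h1C)
    set g := 1 - θ₀ * (1 + C) with hgdef
    have hg : 0 < g := by simp [hgdef]; linarith
    set δ := 2 * θ₀ * C / g + 1 with hδdef
    have hδ : 0 < δ := by positivity
    have hδi : 0 < δ⁻¹ := inv_pos.mpr hδ
    -- θ₀ * C * δ⁻¹ < g
    have hkeyδ : θ₀ * C * δ⁻¹ < g := by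
      rw [mul_comm, inv_mul_eq_div, div_lt_iff₀ hδ]
      have : g * δ = 2 * θ₀ * C + g := by
        rw [hδdef, mul_add, mul_one, mul_div_assoc', mul_div_cancel_left₀ _ (ne_of_gt hg)]
      nlinarith [hθ0, hC, hg]
    set num := 1 - θ₀ * (1 + (1 + δ⁻¹) * C) with hnumdef
    have hnum : 0 < num := by
      have : num = g - θ₀ * C * δ⁻¹ := by rw [hnumdef, hgdef]; ring
      rw [this]; linarith
    refine ⟨min (1/2) (num / (1 + δ)), lt_min (by norm_num) (by positivity),
      lt_of_le_of_lt (min_le_left _ _) (by norm_num), ?_⟩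
    intro hcontr
    set κ₀ := min (1/2) (num / (1 + δ)) with hκdef
    have hκ0 : 0 < κ₀ := lt_min (by norm_num) (by positivity)
    have hκ1 : κ₀ < 1 := lt_of_le_of_lt (min_le_left _ _) (by norm_num)
    have hkey := key κ₀ hκ0 hκ1 hcontr δ hδ
    have hκle : κ₀ ≤ num / (1 + δ) := min_le_right _ _
    have hκmul : (1 + δ) * κ₀ ≤ num := by
      rw [le_div_iff₀ (by positivity : (0:ℝ) < 1 + δ)] at hκle
      linarith [hκle]
    have hD : 0 < 1 + (1 + δ⁻¹) * C := by positivity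
    have h6 : θ₀ * (1 + (1 + δ⁻¹) * C) ≤ 1 - (1 + δ) * κ₀ := by
      rw [hnumdef] at hκmul; linarith
    have h7 : θ₀ * (1 + (1 + δ⁻¹) * C) * S ≤ (1 - (1 + δ) * κ₀) * S :=
      mul_le_mul_of_nonneg_right h6 hSnn
    have h8 : (1 + (1 + δ⁻¹) * C) * (θ₀ * S) ≤ (1 + (1 + δ⁻¹) * C) * SR := by
      calc (1 + (1 + δ⁻¹) * C) * (θ₀ * S) = θ₀ * (1 + (1 + δ⁻¹) * C) * S := by ring
        _ ≤ (1 - (1 + δ) * κ₀) * S := h7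
        _ ≤ (1 + (1 + δ⁻¹) * C) * SR := by
            have := hkey; rw [hCdef] at *; linarith [hkey]
    exact le_of_mul_le_mul_left h8 hD
end

section
/- Let $V$ be a real Hilbert space with inner product $a(\cdot,\cdot)$ and $b(\cdot,\cdot)$ a second inner product on $V$. Let $v, \hat v \in V$ with $b(v,v) = b(\hat v, \hat v) = 1$, $\mu := a(v,v)$, $\hat\mu := a(\hat v, \hat v)$, and suppose the discrete eigenvalue relation $a(\hat v, w) = \hat\mu\, b(\hat v, w)$ holds for $w = \hat v - v$. Then $a(\hat v - v, \hat v - v) = \mu - \hat\mu + \hat\mu\, b(\hat v - v, \hat v - v)$. In particular, if $\hat\mu \le \mu$ then $a(\hat v - v, \hat v - v) \ge \mu - \hat\mu \ge 0$. -/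
/-- Equation (8.2) of the eigenvalue lemma: relation between the energy distance of
normalized discrete eigenvectors and the difference of discrete eigenvalues. -/
theorem eigenvalue_energy_identity
    {V : Type*} [AddCommGroup V] [Module ℝ V]
    (a b : LinearMap.BilinForm ℝ V) (ha : a.IsSymm) (hb : b.IsSymm)
    (hbpos : ∀ w : V, 0 ≤ b w w)
    (v vhat : V) (hbv : b v v = 1) (hbvhat : b vhat vhat = 1)
    (μ μhat : ℝ) (hμ : μ = a v v) (hμhat : μhat = a vhat vhat)
    (heig : a vhat (vhat - v) = μhat * b vhat (vhat - v)) :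
    a (vhat - v) (vhat - v) = μ - μhat + μhat * b (vhat - v) (vhat - v) ∧
    (μhat ≤ μ → 0 ≤ μhat →
      μ - μhat ≤ a (vhat - v) (vhat - v) ∧ 0 ≤ μ - μhat) := by
  have hsymm_a : a v vhat = a vhat v := by
    have := ha.eq v vhat; simpa using this
  have hsymm_b : b v vhat = b vhat v := by
    have := hb.eq v vhat; simpa using this
  have hd : 0 ≤ b (vhat - v) (vhat - v) := hbpos _
  simp only [map_sub, LinearMap.sub_apply] at heig hd ⊢
  simp only [hsymm_a, hsymm_b, hbv, hbvhat, ← hμ, ← hμhat] at heig hd ⊢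
  constructor
  · linear_combination 2 * heig
  · intro h1 h2
    constructor
    · nlinarith [heig, hd, mul_nonneg h2 hd]
    · linarith
end

section
/- Let $\eta, \tilde\eta, \eta_T, \tilde\eta_T \ge 0$ (for $T$ in a finite set $\mathcal{T}$, with $\eta^2 = \sum_T \eta_T^2$, $\tilde\eta^2 = \sum_T \tilde\eta_T^2$) and suppose: (i) $(1 - \vartheta C_{stab})\tilde\eta \le \eta \le (1 + \vartheta C_{stab})\tilde\eta$ and, componentwise over any subset $\mathcal{M} \subseteq \mathcal{T}$, the Young-type bound $\sum_{T\in\mathcal{M}} \eta_T^2 \le (1+\delta)\sum_{T\in\mathcal{M}} \tilde\eta_T^2 + (1+\delta^{-1})\vartheta^2 C_{stab}^2 \tilde\eta^2$ for all $\delta > 0$, where $0 < \vartheta C_{stab} < 1$. If $\theta_1 \eta^2 \le \sum_{T\in\mathcal{M}} \eta_T^2$ for some $0 < \theta_1 \le 1$, and $0 < \theta_2 \le \sup_{\delta > 0} \frac{(1 - \vartheta C_{stab})^2\theta_1 - (1+\delta^{-1})\vartheta^2 C_{stab}^2}{1+\delta}$ with the supremum positive, then $\theta_2 \tilde\eta^2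 \le \sum_{T\in\mathcal{M}} \tilde\eta_T^2$. -/
open Finset

/-- Lemma 6.4(ii): equivalence of Dörfler marking between the exact estimator `η` and
its inexact-solver perturbation `η̃`. -/
theorem doerfler_marking_inexact
    {α : Type*} [DecidableEq α]
    (T M : Finset α) (hM : M ⊆ T)
    (ηT ηtT : α → ℝ) (hη : ∀ x, 0 ≤ ηT x) (hηt : ∀ x, 0 ≤ ηtT x)
    (ϑ Cstab : ℝ) (hϑ : 0 < ϑ * Cstab) (hϑ1 : ϑ * Cstab < 1)
    (hequiv₁ : (1 - ϑ * Cstab) * Real.sqrt (∑ x ∈ T, (ηtT x) ^ 2) ≤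
      Real.sqrt (∑ x ∈ T, (ηT x) ^ 2))
    (hequiv₂ : Real.sqrt (∑ x ∈ T, (ηT x) ^ 2) ≤
      (1 + ϑ * Cstab) * Real.sqrt (∑ x ∈ T, (ηtT x) ^ 2))
    (hyoung : ∀ M' : Finset α, M' ⊆ T → ∀ δ : ℝ, 0 < δ →
      ∑ x ∈ M', (ηT x) ^ 2 ≤ (1 + δ) * ∑ x ∈ M', (ηtT x) ^ 2
        + (1 + δ⁻¹) * ϑ ^ 2 * Cstab ^ 2 * ∑ x ∈ T, (ηtT x) ^ 2)
    (θ₁ θ₂ : ℝ) (hθ₁0 : 0 < θ₁) (hθ₁1 : θ₁ ≤ 1)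
    (hmark : θ₁ * ∑ x ∈ T, (ηT x) ^ 2 ≤ ∑ x ∈ M, (ηT x) ^ 2)
    (hsuppos : 0 < sSup {y : ℝ | ∃ δ : ℝ, 0 < δ ∧
      y = ((1 - ϑ * Cstab) ^ 2 * θ₁ - (1 + δ⁻¹) * ϑ ^ 2 * Cstab ^ 2) / (1 + δ)})
    (hθ₂0 : 0 < θ₂)
    (hθ₂ : θ₂ ≤ sSup {y : ℝ | ∃ δ : ℝ, 0 < δ ∧
      y = ((1 - ϑ * Cstab) ^ 2 * θ₁ - (1 + δ⁻¹) * ϑ ^ 2 * Cstab ^ 2) / (1 + δ)}) :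
    θ₂ * ∑ x ∈ T, (ηtT x) ^ 2 ≤ ∑ x ∈ M, (ηtT x) ^ 2 := by
  set A : ℝ := ∑ x ∈ T, (ηtT x) ^ 2 with hA
  set B : ℝ := ∑ x ∈ M, (ηtT x) ^ 2 with hB
  have hA0 : 0 ≤ A := Finset.sum_nonneg fun x _ => sq_nonneg _
  have hB0 : 0 ≤ B := Finset.sum_nonneg fun x _ => sq_nonneg _
  have hAE0 : 0 ≤ ∑ x ∈ T, (ηT x) ^ 2 := Finset.sum_nonneg fun x _ => sq_nonneg _
  -- (1 - ϑ Cstab)^2 * A ≤ ∑_T η^2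
  have hlow : (1 - ϑ * Cstab) ^ 2 * A ≤ ∑ x ∈ T, (ηT x) ^ 2 := by
    have h1 : 0 ≤ (1 - ϑ * Cstab) * Real.sqrt A :=
      mul_nonneg (by linarith) (Real.sqrt_nonneg _)
    have h2 := mul_self_le_mul_self h1 hequiv₁
    have h3 : Real.sqrt A * Real.sqrt A = A := Real.mul_self_sqrt hA0
    have h4 : Real.sqrt (∑ x ∈ T, (ηT x) ^ 2) * Real.sqrt (∑ x ∈ T, (ηT x) ^ 2)
        = ∑ x ∈ T, (ηT x) ^ 2 := Real.mul_self_sqrt hAE0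
    nlinarith [h2]
  -- key per-δ estimate
  have key : ∀ δ : ℝ, 0 < δ →
      ((1 - ϑ * Cstab) ^ 2 * θ₁ - (1 + δ⁻¹) * ϑ ^ 2 * Cstab ^ 2) * A ≤ (1 + δ) * B := by
    intro δ hδ
    have hy := hyoung M hM δ hδ
    have h5 : θ₁ * ((1 - ϑ * Cstab) ^ 2 * A) ≤ θ₁ * ∑ x ∈ T, (ηT x) ^ 2 :=
      mul_le_mul_of_nonneg_left hlow hθ₁0.le
    nlinarith [h5, hmark, hy, mul_nonneg hA0 (sub_nonneg.mpr hθ₁1)]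
  set S : Set ℝ := {y : ℝ | ∃ δ : ℝ, 0 < δ ∧
      y = ((1 - ϑ * Cstab) ^ 2 * θ₁ - (1 + δ⁻¹) * ϑ ^ 2 * Cstab ^ 2) / (1 + δ)} with hS
  rcases eq_or_lt_of_le hA0 with hAeq | hApos
  · rw [← hAeq, mul_zero]; exact hB0
  · have hsup_le : sSup S ≤ B / A := by
      apply Real.sSup_le _ (div_nonneg hB0 hA0)
      rintro y ⟨δ, hδ, rfl⟩
      rw [div_le_div_iff₀ (by linarith) hApos]
      linarith [key δ hδ]
    calc θ₂ * A ≤ sSup S * A := mul_le_mul_of_nonneg_right hθ₂ hA0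
      _ ≤ (B / A) * A := mul_le_mul_of_nonneg_right hsup_le hA0
      _ = B := div_mul_cancel₀ B (ne_of_gt hApos)
end
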